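/- Let Γ be a discrete cocompact subgroup of isometries of ℝⁿ such that ℰ is nonempty. Then for every X ∈ ℰ the Voronoi cell V_X is the intersection of the half-spaces determined by its (n−1)-dimensional faces: V_X = ⋂_{Y ∈ 𝔖(X)} H(X,Y), where H(X,Y) = { z ∈ ℝⁿ : ⟪z − (X+Y)/2, Y − X⟫ ≤ 0 }. -/

import Mathlib

open Metric

noncomputable section

/-- The rotational (linear) part of an isometry of Euclidean space,
evaluated at a vector `v`. -/
def rotPart {n : ℕ} (γ : EuclideanSpace ℝ (Fin n) ≃ᵢ EuclideanSpace ℝ (Fin n))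
    (v : EuclideanSpace ℝ (Fin n)) : EuclideanSpace ℝ (Fin n) :=
  γ v - γ 0

/-- A subgroup of isometries acts properly discontinuously. -/
def ProperlyDisc {n : ℕ}
    (Γ : Subgroup (EuclideanSpace ℝ (Fin n) ≃ᵢ EuclideanSpace ℝ (Fin n))) : Prop :=
  ∀ K : Set (EuclideanSpace ℝ (Fin n)), IsCompact K →
    {γ : EuclideanSpace ℝ (Fin n) ≃ᵢ EuclideanSpace ℝ (Fin n) |
      γ ∈ Γ ∧ ((γ '' K) ∩ K).Nonempty}.Finite

/-- A subgroup of isometries acts cocompactly. -/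
def CocompactAct {n : ℕ}
    (Γ : Subgroup (EuclideanSpace ℝ (Fin n) ≃ᵢ EuclideanSpace ℝ (Fin n))) : Prop :=
  ∃ K : Set (EuclideanSpace ℝ (Fin n)), IsCompact K ∧ ⋃ γ ∈ Γ, γ '' K = Set.univ

/-- The fixed-point set of a subgroup of isometries. -/
def FixSet {n : ℕ}
    (H : Subgroup (EuclideanSpace ℝ (Fin n) ≃ᵢ EuclideanSpace ℝ (Fin n))) :
    Set (EuclideanSpace ℝ (Fin n)) :=
  {y | ∀ h ∈ H, h y = y}

/-- `ℰ`: the set of points which are isolated points of the fixed-point set of some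
subgroup of `Γ`. -/
def SingSet {n : ℕ}
    (Γ : Subgroup (EuclideanSpace ℝ (Fin n) ≃ᵢ EuclideanSpace ℝ (Fin n))) :
    Set (EuclideanSpace ℝ (Fin n)) :=
  {x | ∃ H, H ≤ Γ ∧ x ∈ FixSet H ∧ ∃ ε > 0, FixSet H ∩ ball x ε = {x}}

/-- The Voronoi cell of `x` with respect to a set `E`. -/
def Vor {n : ℕ} (E : Set (EuclideanSpace ℝ (Fin n))) (x : EuclideanSpace ℝ (Fin n)) :
    Set (EuclideanSpace ℝ (Fin n)) :=
  {z | ∀ y ∈ E, dist z x ≤ dist z y}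

/-- `𝔖(x)`: the set of points `y ∈ ℰ`, `y ≠ x`, whose Voronoi cell meets that of `x`
in a face of dimension `n - 1`. -/
def SS {n : ℕ}
    (Γ : Subgroup (EuclideanSpace ℝ (Fin n) ≃ᵢ EuclideanSpace ℝ (Fin n)))
    (x : EuclideanSpace ℝ (Fin n)) : Set (EuclideanSpace ℝ (Fin n)) :=
  {y | y ∈ SingSet Γ ∧ y ≠ x ∧
    Module.finrank ℝ
      (affineSpan ℝ (Vor (SingSet Γ) x ∩ Vor (SingSet Γ) y)).direction = n - 1}

/-- `Γ_x^#(v)`: the orbit of the vector `v` under the rotational parts of the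
stabilizer of `x` in `Γ`. -/
def rotSet {n : ℕ}
    (Γ : Subgroup (EuclideanSpace ℝ (Fin n) ≃ᵢ EuclideanSpace ℝ (Fin n)))
    (x v : EuclideanSpace ℝ (Fin n)) : Set (EuclideanSpace ℝ (Fin n)) :=
  {w | ∃ γ ∈ Γ, γ x = x ∧ rotPart γ v = w}

/-- The reflection property. -/
def ReflProp {n : ℕ}
    (Γ : Subgroup (EuclideanSpace ℝ (Fin n) ≃ᵢ EuclideanSpace ℝ (Fin n))) : Prop :=
  ∀ x ∈ SingSet Γ, ∀ y ∈ SS Γ x, rotSet Γ x (x - y) = {x - y, y - x}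

/-- The midpoint property. -/
def MidProp {n : ℕ}
    (Γ : Subgroup (EuclideanSpace ℝ (Fin n) ≃ᵢ EuclideanSpace ℝ (Fin n))) : Prop :=
  ∀ x ∈ SingSet Γ, ∀ y ∈ SS Γ x,
    midpoint ℝ x y ∈ Vor (SingSet Γ) x ∩ Vor (SingSet Γ) y ∧
    ∀ z ∈ SingSet Γ, z ≠ x → z ≠ y → midpoint ℝ x y ∉ Vor (SingSet Γ) z
section Aux

variable {n : ℕ}

local notation "E" => EuclideanSpace ℝ (Fin n)

private lemma key_identity (z X Y : E) :
    (inner ℝ (z - X) (z - X) : ℝ) - inner ℝ (z - Y) (z - Y)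
      = 2 * inner ℝ (z - midpoint ℝ X Y) (Y - X) := by
  rw [midpoint_eq_smul_add, invOf_eq_inv]
  simp only [inner_sub_left, inner_sub_right, inner_add_left, inner_add_right,
    real_inner_smul_left, real_inner_smul_right]
  rw [real_inner_comm X z, real_inner_comm Y z, real_inner_comm X Y]
  ring

private lemma halfspace_le_iff (z X Y : E) :
    inner (𝕜 := ℝ) (z - midpoint ℝ X Y) (Y - X) ≤ 0 ↔ dist z X ≤ dist z Y := by
  have h2 := key_identity z X Y
  rw [dist_eq_norm, dist_eq_norm, ← Real.sqrt_sq (norm_nonneg (z - X)),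
    ← Real.sqrt_sq (norm_nonneg (z - Y)), Real.sqrt_le_sqrt_iff (by positivity),
    ← real_inner_self_eq_norm_sq, ← real_inner_self_eq_norm_sq]
  constructor <;> intro h <;> linarith

private lemma halfspace_lt_iff (z X Y : E) :
    inner (𝕜 := ℝ) (z - midpoint ℝ X Y) (Y - X) < 0 ↔ dist z X < dist z Y := by
  rw [← not_le, ← not_le, not_iff_not]
  have h2 := key_identity z X Y
  rw [dist_eq_norm, dist_eq_norm, ← Real.sqrt_sq (norm_nonneg (z - Y)),
    ← Real.sqrt_sq (norm_nonneg (z - X)), Real.sqrt_le_sqrt_iff (by positivity),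
    ← real_inner_self_eq_norm_sq, ← real_inner_self_eq_norm_sq]
  constructor <;> intro h <;> linarith

end Aux
section Aux2
variable {n : ℕ}
local notation "E" => EuclideanSpace ℝ (Fin n)
local notation "Iso" => (EuclideanSpace ℝ (Fin n) ≃ᵢ EuclideanSpace ℝ (Fin n))

private lemma fixset_singleton {H : Subgroup Iso} {x : E} (hx : x ∈ FixSet H)
    {ε : ℝ} (hε : 0 < ε) (hiso : FixSet H ∩ Metric.ball x ε = {x}) :
    FixSet H = {x} := by
  ext y
  simp only [Set.mem_singleton_iff]
  constructor
  · intro hy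
    by_contra hne
    -- the sequence x + 2⁻ᵏ • (y - x) stays in FixSet H
    have hmem : ∀ k : ℕ, x + ((2:ℝ)⁻¹) ^ k • (y - x) ∈ FixSet H := by
      intro k
      induction k with
      | zero => simpa using hy
      | succ k ih =>
        have hmid : x + ((2:ℝ)⁻¹) ^ (k+1) • (y - x)
            = midpoint ℝ x (x + ((2:ℝ)⁻¹) ^ k • (y - x)) := by
          rw [midpoint_eq_smul_add, invOf_eq_inv]
          rw [pow_succ]
          module
        rw [hmid]
        intro h hh
        rw [IsometryEquiv.map_midpoint, hx h hh, ih h hh]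
    have hyx : y - x ≠ 0 := sub_ne_zero.mpr hne
    have hpos : 0 < ‖y - x‖ := norm_pos_iff.mpr hyx
    obtain ⟨k, hk⟩ := exists_pow_lt_of_lt_one (x := ε / ‖y - x‖) (y := (2:ℝ)⁻¹)
      (by positivity) (by norm_num)
    have hklt : ((2:ℝ)⁻¹) ^ k * ‖y - x‖ < ε := by
      rw [lt_div_iff₀ hpos] at hk
      linarith
    have hball : x + ((2:ℝ)⁻¹) ^ k • (y - x) ∈ FixSet H ∩ Metric.ball x ε := by
      refine ⟨hmem k, ?_⟩
      rw [Metric.mem_ball, dist_eq_norm]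
      simpa [norm_smul, abs_of_pos (pow_pos (by norm_num : (0:ℝ) < 2⁻¹) k)] using hklt
    rw [hiso] at hball
    simp only [Set.mem_singleton_iff, add_eq_left, smul_eq_zero, sub_eq_zero,
      pow_eq_zero_iff] at hball
    rcases hball with h | h
    · norm_num at h
    · exact hne h
  · rintro rfl; exact hx

end Aux2
section Aux3
variable {n : ℕ} (hn : 1 ≤ n)
local notation "E" => EuclideanSpace ℝ (Fin n)
local notation "Iso" => (EuclideanSpace ℝ (Fin n) ≃ᵢ EuclideanSpace ℝ (Fin n))

private lemma mem_singSet_iff {Γ : Subgroup Iso} {x : E} :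
    x ∈ SingSet Γ ↔ ∃ H ≤ Γ, FixSet H = {x} := by
  constructor
  · rintro ⟨H, hHΓ, hxH, ε, hε, hiso⟩
    exact ⟨H, hHΓ, fixset_singleton hxH hε hiso⟩
  · rintro ⟨H, hHΓ, hfix⟩
    refine ⟨H, hHΓ, by rw [hfix]; rfl, 1, one_pos, ?_⟩
    rw [hfix]
    apply Set.eq_singleton_iff_unique_mem.mpr
    constructor
    · exact ⟨rfl, by simp⟩
    · rintro y ⟨hy, -⟩; exact hy

private lemma smul_mem_singSet {Γ : Subgroup Iso} {γ : Iso} (hγ : γ ∈ Γ)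
    {x : E} (hx : x ∈ SingSet Γ) : γ x ∈ SingSet Γ := by
  rw [mem_singSet_iff] at hx ⊢
  obtain ⟨H, hHΓ, hfix⟩ := hx
  refine ⟨Subgroup.map (MulAut.conj γ).toMonoidHom H, ?_, ?_⟩
  · rintro h' hh'
    rw [Subgroup.mem_map] at hh'
    obtain ⟨h, hh, rfl⟩ := hh'
    simp only [MulEquiv.coe_toMonoidHom, MulAut.conj_apply]
    exact Γ.mul_mem (Γ.mul_mem hγ (hHΓ hh)) (Γ.inv_mem hγ)
  · ext y
    simp only [Set.mem_singleton_iff]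
    have hmem : y ∈ FixSet (Subgroup.map (MulAut.conj γ).toMonoidHom H) ↔
        γ⁻¹ y ∈ FixSet H := by
      constructor
      · intro hy h hh
        have := hy ((MulAut.conj γ) h) (Subgroup.mem_map.mpr ⟨h, hh, rfl⟩)
        simp only [MulAut.conj_apply] at this
        have : h (γ⁻¹ y) = γ⁻¹ y := by
          have h2 : γ (h (γ⁻¹ y)) = y := this
          calc h (γ⁻¹ y) = γ⁻¹ (γ (h (γ⁻¹ y))) := by simp
          _ = γ⁻¹ y := by rw [h2]
        exact this
      · intro hy h' hh'
        rw [Subgroup.mem_map] at hh'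
        obtain ⟨h, hh, rfl⟩ := hh'
        show γ (h (γ⁻¹ y)) = y
        rw [hy h hh]
        simp
    rw [hmem, hfix]
    simp only [Set.mem_singleton_iff]
    constructor
    · intro h; rw [← h]; simp
    · intro h; rw [h]; simp

end Aux3
section Aux4
variable {n : ℕ}
local notation "E" => EuclideanSpace ℝ (Fin n)
local notation "Iso" => (EuclideanSpace ℝ (Fin n) ≃ᵢ EuclideanSpace ℝ (Fin n))

private lemma singSet_locally_finite {Γ : Subgroup Iso} (hdisc : ProperlyDisc Γ)
    {K : Set E} (hK : IsCompact K) : (SingSet Γ ∩ K).Finite := by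
  classical
  set S : Set Iso := {γ | γ ∈ Γ ∧ ((γ '' K) ∩ K).Nonempty} with hSdef
  have hS : S.Finite := hdisc K hK
  set φ : E → Set Iso := fun x =>
    if hx : ∃ H ≤ Γ, FixSet H = {x} then (hx.choose : Set Iso) else ∅ with hφdef
  have hchoice : ∀ x ∈ SingSet Γ, ∃ hx : ∃ H ≤ Γ, FixSet H = {x},
      φ x = (hx.choose : Set Iso) := by
    intro x hx
    have hx' := mem_singSet_iff.mp hx
    exact ⟨hx', by simp [hφdef, dif_pos hx']⟩
  have hmaps : ∀ x ∈ SingSet Γ ∩ K, φ x ⊆ S := by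
    rintro x ⟨hx, hxK⟩ γ hγ
    obtain ⟨hx', hφx⟩ := hchoice x hx
    rw [hφx] at hγ
    have hspec := hx'.choose_spec
    have hγΓ : γ ∈ Γ := hspec.1 hγ
    have hγx : γ x = x := by
      have hxfix : x ∈ FixSet hx'.choose := by rw [hspec.2]; rfl
      exact hxfix γ hγ
    exact ⟨hγΓ, ⟨x, ⟨x, hxK, hγx⟩, hxK⟩⟩
  have hinj : Set.InjOn φ (SingSet Γ ∩ K) := by
    rintro x ⟨hx, -⟩ x' ⟨hx', -⟩ heq
    obtain ⟨h1, hφ1⟩ := hchoice x hx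
    obtain ⟨h2, hφ2⟩ := hchoice x' hx'
    rw [hφ1, hφ2] at heq
    have hfixeq : FixSet h1.choose = FixSet h2.choose := by
      unfold FixSet
      ext y
      constructor <;> intro hy h hh
      · have h' : h ∈ (h1.choose : Set Iso) := by rw [heq]; exact hh
        exact hy h h'
      · have h' : h ∈ (h2.choose : Set Iso) := by rw [← heq]; exact hh
        exact hy h h'
    have := h1.choose_spec.2 ▸ (h2.choose_spec.2 ▸ hfixeq)
    exact Set.singleton_eq_singleton_iff.mp this
  have himg : (φ '' (SingSet Γ ∩ K)).Finite :=
    Set.Finite.subset hS.finite_subsets (by rintro t ⟨x, hx, rfl⟩; exact hmaps x hx)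
  exact Set.Finite.of_finite_image himg hinj

private lemma rel_dense {Γ : Subgroup Iso} (hcc : CocompactAct Γ)
    (hne : (SingSet Γ).Nonempty) :
    ∃ R > 0, ∀ z : E, ∃ x ∈ SingSet Γ, dist z x ≤ R := by
  obtain ⟨K, hK, hcover⟩ := hcc
  obtain ⟨x₀, hx₀⟩ := hne
  refine ⟨Metric.diam K + 1, by positivity, fun z => ?_⟩
  have hz : z ∈ ⋃ γ ∈ Γ, γ '' K := hcover ▸ Set.mem_univ z
  have hx₀' : x₀ ∈ ⋃ γ ∈ Γ, γ '' K := hcover ▸ Set.mem_univ x₀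
  simp only [Set.mem_iUnion] at hz hx₀'
  obtain ⟨γ, hγ, k, hk, hγk⟩ := hz
  obtain ⟨γ', hγ', k', hk', hγ'k'⟩ := hx₀'
  refine ⟨(γ * γ'⁻¹) x₀, smul_mem_singSet (Γ.mul_mem hγ (Γ.inv_mem hγ')) hx₀, ?_⟩
  have h1 : (γ * γ'⁻¹) x₀ = γ k' := by
    show γ (γ'⁻¹ x₀) = γ k'
    rw [← hγ'k']
    simp
  rw [h1, ← hγk, IsometryEquiv.dist_eq]
  calc dist k k' ≤ Metric.diam K := Metric.dist_le_diam_of_mem hK.isBounded hk hk'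
  _ ≤ Metric.diam K + 1 := by linarith

end Aux4
section Aux5
variable {n : ℕ}
local notation "E" => EuclideanSpace ℝ (Fin n)

private lemma inner_line (X z m d : E) (t : ℝ) :
    (inner ℝ (X + t • (z - X) - m) d : ℝ)
      = inner ℝ (X - m) d + t * ((inner ℝ (z - m) d : ℝ) - inner ℝ (X - m) d) := by
  have h : X + t • (z - X) - m = (X - m) + t • ((z - m) - (X - m)) := by
    module
  rw [h, inner_add_left, real_inner_smul_left]
  simp only [inner_sub_left]
  try ring

private lemma inner_shift (w v m d : E) :
    (inner ℝ (w + v - m) d : ℝ) = inner ℝ (w - m) d + inner ℝ v d := by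
  rw [show w + v - m = (w - m) + v by abel, inner_add_left]

end Aux5
set_option maxHeartbeats 2000000 in
theorem voronoi_cell_eq_inter_halfspaces {n : ℕ} (hn : 1 ≤ n)
    (Γ : Subgroup (EuclideanSpace ℝ (Fin n) ≃ᵢ EuclideanSpace ℝ (Fin n)))
    (hdisc : ProperlyDisc Γ) (hcc : CocompactAct Γ)
    (hne : (SingSet Γ).Nonempty)
    (X : EuclideanSpace ℝ (Fin n)) (hX : X ∈ SingSet Γ) :
    Vor (SingSet Γ) X =
      ⋂ Y ∈ SS Γ X,
        {z : EuclideanSpace ℝ (Fin n) |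
          inner (𝕜 := ℝ) (z - midpoint ℝ X Y) (Y - X) ≤ 0} := by
  classical
  obtain ⟨R, hR0, hRdense⟩ := rel_dense hcc hne
  set F : Set (EuclideanSpace ℝ (Fin n)) :=
    {Y | Y ∈ SingSet Γ ∧ Y ≠ X ∧ dist X Y ≤ 6*R} with hFdef
  have hFfin : F.Finite := by
    apply Set.Finite.subset (singSet_locally_finite hdisc (isCompact_closedBall X (6*R)))
    rintro Y ⟨h1, h2, h3⟩
    exact ⟨h1, by rwa [Metric.mem_closedBall, dist_comm]⟩
  have hrepr : ∀ z : EuclideanSpace ℝ (Fin n),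
      (∀ Y ∈ F, inner (𝕜 := ℝ) (z - midpoint ℝ X Y) (Y - X) ≤ 0) →
      z ∈ Vor (SingSet Γ) X := by
    intro z hz
    have hzX : dist z X ≤ 3*R := by
      by_contra hfar
      push_neg at hfar
      set d := dist z X with hd
      have hd0 : 0 < d := lt_trans (by positivity) hfar
      set p : EuclideanSpace ℝ (Fin n) := X + (3*R/d) • (z - X) with hp
      have hpX : dist p X = 3*R := by
        rw [dist_eq_norm, show p - X = (3*R/d) • (z - X) by rw [hp]; abel,
          norm_smul, Real.norm_eq_abs, abs_of_pos (by positivity), ← dist_eq_norm, ← hd]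
        field_simp
      obtain ⟨Y, hY, hpY⟩ := hRdense p
      have hXp : dist X p = 3*R := by rw [dist_comm]; exact hpX
      have hYp : dist Y p = dist p Y := dist_comm Y p
      have hXY_lb : 2*R ≤ dist X Y := by linarith [dist_triangle X Y p]
      have hYne : Y ≠ X := by
        intro h; rw [h, dist_self] at hXY_lb; linarith
      have hYF : Y ∈ F := ⟨hY, hYne, by linarith [dist_triangle X p Y]⟩
      have hzp : dist z p = d - 3*R := by
        have h1 : z - p = (1 - 3*R/d) • (z - X) := by
          rw [hp]; module
        have h2 : (0:ℝ) < 1 - 3*R/d := by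
          rw [sub_pos, div_lt_one hd0]; linarith
        rw [dist_eq_norm, h1, norm_smul, Real.norm_eq_abs, abs_of_pos h2,
          ← dist_eq_norm, ← hd]
        field_simp
      have hzY : dist z Y < dist z X := by
        calc dist z Y ≤ dist z p + dist p Y := dist_triangle z p Y
        _ ≤ (d - 3*R) + R := by rw [hzp]; linarith
        _ < d := by linarith
      have := (halfspace_le_iff z X Y).mp (hz Y hYF)
      linarith
    intro y hy
    rcases eq_or_ne y X with rfl | hyne
    · exact le_refl _
    rcases le_or_gt (dist X y) (6*R) with hnear | hfar
    · exact (halfspace_le_iff z X y).mp (hz y ⟨hy, hyne, hnear⟩)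
    · have htri := dist_triangle X z y
      have : dist z X = dist X z := dist_comm z X
      linarith
  -- minimal finite family representing the Voronoi cell
  have hex : ∃ m : ℕ, ∃ G : Finset (EuclideanSpace ℝ (Fin n)), ↑G ⊆ F ∧
      (∀ z : EuclideanSpace ℝ (Fin n),
        (∀ Y ∈ G, inner (𝕜 := ℝ) (z - midpoint ℝ X Y) (Y - X) ≤ 0) →
        z ∈ Vor (SingSet Γ) X) ∧ G.card = m :=
    ⟨hFfin.toFinset.card, hFfin.toFinset, by simp,
      fun z hz => hrepr z (fun Y hY => hz Y (hFfin.mem_toFinset.mpr hY)), rfl⟩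
  obtain ⟨G, hGF, hGP, hGcard⟩ := Nat.find_spec hex
  have hGS : ∀ Y₀ ∈ G, Y₀ ∈ SS Γ X := by
    intro Y₀ hY₀G
    obtain ⟨hY₀E, hY₀ne, hY₀dist⟩ := hGF hY₀G
    have hcard : (G.erase Y₀).card < Nat.find hex := by
      rw [Finset.card_erase_of_mem hY₀G]
      have : 0 < G.card := Finset.card_pos.mpr ⟨Y₀, hY₀G⟩
      omega
    have hnotP := Nat.find_min hex hcard
    have hnP : ¬ (∀ z : EuclideanSpace ℝ (Fin n),
        (∀ Y ∈ G.erase Y₀, inner (𝕜 := ℝ) (z - midpoint ℝ X Y) (Y - X) ≤ 0) →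
        z ∈ Vor (SingSet Γ) X) := by
      intro hP
      exact hnotP ⟨G.erase Y₀,
        subset_trans (Finset.coe_subset.mpr (Finset.erase_subset Y₀ G)) hGF, hP, rfl⟩
    push_neg at hnP
    obtain ⟨z, hzG', hzV⟩ := hnP
    have hzY₀ : (0:ℝ) < inner ℝ (z - midpoint ℝ X Y₀) (Y₀ - X) := by
      by_contra hle
      push_neg at hle
      refine hzV (hGP z (fun Y hY => ?_))
      rcases eq_or_ne Y Y₀ with rfl | hne
      · exact hle
      · exact hzG' Y (Finset.mem_erase.mpr ⟨hne, hY⟩)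
    -- construct the point w on the bisector hyperplane
    set m₀ : EuclideanSpace ℝ (Fin n) := midpoint ℝ X Y₀ with hm₀
    set d₀ : EuclideanSpace ℝ (Fin n) := Y₀ - X with hd₀
    have hd₀ne : d₀ ≠ 0 := sub_ne_zero.mpr hY₀ne
    have hfXneg : ∀ Y, Y ∈ SingSet Γ → Y ≠ X →
        (inner ℝ (X - midpoint ℝ X Y) (Y - X) : ℝ) < 0 := by
      intro Y hYE hYne
      rw [halfspace_lt_iff]
      rw [dist_self]
      exact dist_pos.mpr (Ne.symm hYne)
    have hfX₀ : (inner ℝ (X - m₀) d₀ : ℝ) < 0 := hfXneg Y₀ hY₀E hY₀ne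
    set fX : ℝ := inner ℝ (X - m₀) d₀ with hfXdef
    set fz : ℝ := inner ℝ (z - m₀) d₀ with hfzdef
    have hfz : 0 < fz := hzY₀
    set t₀ : ℝ := (-fX) / (fz - fX) with ht₀def
    have hden : 0 < fz - fX := by linarith
    have ht₀0 : 0 < t₀ := div_pos (by linarith) hden
    have ht₀1 : t₀ < 1 := by
      rw [ht₀def, div_lt_one hden]; linarith
    set w : EuclideanSpace ℝ (Fin n) := X + t₀ • (z - X) with hw
    have hw0 : (inner ℝ (w - m₀) d₀ : ℝ) = 0 := by
      rw [hw, inner_line, ← hfXdef, ← hfzdef, ht₀def]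
      field_simp
      ring
    have hwneg : ∀ Y ∈ G.erase Y₀,
        (inner ℝ (w - midpoint ℝ X Y) (Y - X) : ℝ) < 0 := by
      intro Y hYG'
      obtain ⟨hYE, hYne, -⟩ := hGF (Finset.mem_of_mem_erase hYG')
      have hfXY := hfXneg Y hYE hYne
      have hfzY := hzG' Y hYG'
      rw [hw, inner_line]
      nlinarith
    -- choose δ
    have hδ : ∃ δ : ℝ, 0 < δ ∧ ∀ Y ∈ G.erase Y₀,
        δ * (‖Y - X‖ + 1) ≤ -(inner ℝ (w - midpoint ℝ X Y) (Y - X) : ℝ) := by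
      set s : Finset ℝ := insert (1:ℝ) ((G.erase Y₀).image
        (fun Y => -(inner ℝ (w - midpoint ℝ X Y) (Y - X) : ℝ) / (‖Y - X‖ + 1))) with hs
      have hsne : s.Nonempty := ⟨1, Finset.mem_insert_self _ _⟩
      refine ⟨s.min' hsne, ?_, ?_⟩
      · rw [Finset.lt_min'_iff]
        intro a ha
        rw [hs, Finset.mem_insert] at ha
        rcases ha with rfl | ha
        · norm_num
        · rw [Finset.mem_image] at ha
          obtain ⟨Y, hY, rfl⟩ := ha
          have h1 := hwneg Y hY
          have hpos : (0:ℝ) < ‖Y - X‖ + 1 := by positivity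
          apply div_pos (by linarith) hpos
      · intro Y hY
        have hmem : -(inner ℝ (w - midpoint ℝ X Y) (Y - X) : ℝ) / (‖Y - X‖ + 1) ∈ s := by
          rw [hs, Finset.mem_insert, Finset.mem_image]
          exact Or.inr ⟨Y, hY, rfl⟩
        have hle := s.min'_le _ hmem
        have hpos : (0:ℝ) < ‖Y - X‖ + 1 := by positivity
        rw [le_div_iff₀ hpos] at hle
        linarith
    obtain ⟨δ, hδ0, hδle⟩ := hδ
    -- all small perpendicular perturbations of w lie in both Voronoi cells
    set W₀ : Submodule ℝ (EuclideanSpace ℝ (Fin n)) := (ℝ ∙ d₀)ᗮ with hW₀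
    have hball : ∀ v ∈ W₀, ‖v‖ < δ →
        w + v ∈ Vor (SingSet Γ) X ∩ Vor (SingSet Γ) Y₀ := by
      intro v hv hvδ
      have hvd : (inner ℝ v d₀ : ℝ) = 0 := by
        rw [real_inner_comm]
        exact Submodule.mem_orthogonal_singleton_iff_inner_right.mp hv
      have hwv0 : (inner ℝ (w + v - m₀) d₀ : ℝ) = 0 := by
        rw [inner_shift, hw0, hvd, add_zero]
      have hwvG : ∀ Y ∈ G, (inner ℝ (w + v - midpoint ℝ X Y) (Y - X) : ℝ) ≤ 0 := by
        intro Y hYG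
        rcases eq_or_ne Y Y₀ with rfl | hne
        · exact le_of_eq hwv0
        · have hYG' : Y ∈ G.erase Y₀ := Finset.mem_erase.mpr ⟨hne, hYG⟩
          rw [inner_shift]
          have h1 : (inner ℝ v (Y - X) : ℝ) ≤ ‖v‖ * ‖Y - X‖ := real_inner_le_norm v (Y - X)
          have h2 : ‖v‖ * ‖Y - X‖ ≤ δ * (‖Y - X‖ + 1) := by
            have : (0:ℝ) ≤ ‖Y - X‖ := norm_nonneg _
            nlinarith [norm_nonneg v]
          have h3 := hδle Y hYG'
          linarith
      have hwvX : w + v ∈ Vor (SingSet Γ) X := hGP _ hwvG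
      refine ⟨hwvX, ?_⟩
      have heq : dist (w + v) X = dist (w + v) Y₀ := by
        have h1 : dist (w + v) X ≤ dist (w + v) Y₀ :=
          (halfspace_le_iff (w + v) X Y₀).mp (le_of_eq hwv0)
        have h2 : ¬ dist (w + v) X < dist (w + v) Y₀ := by
          intro h
          have := (halfspace_lt_iff (w + v) X Y₀).mpr h
          rw [hwv0] at this
          exact lt_irrefl 0 this
        exact le_antisymm h1 (not_lt.mp h2)
      intro y hy
      calc dist (w + v) Y₀ = dist (w + v) X := heq.symm
      _ ≤ dist (w + v) y := hwvX y hy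
    -- the face has dimension n - 1
    refine ⟨hY₀E, hY₀ne, ?_⟩
    set T : Set (EuclideanSpace ℝ (Fin n)) :=
      Vor (SingSet Γ) X ∩ Vor (SingSet Γ) Y₀ with hT
    have hTsub : T ⊆ (AffineSubspace.mk' m₀ W₀ : AffineSubspace ℝ (EuclideanSpace ℝ (Fin n))) := by
      rintro u ⟨hu1, hu2⟩
      have hd1 : dist u X ≤ dist u Y₀ := hu1 Y₀ hY₀E
      have hd2 : dist u Y₀ ≤ dist u X := hu2 X hX
      have hf0 : (inner ℝ (u - m₀) d₀ : ℝ) = 0 := by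
        have hle : (inner ℝ (u - m₀) d₀ : ℝ) ≤ 0 := (halfspace_le_iff u X Y₀).mpr hd1
        have hge : ¬ (inner ℝ (u - m₀) d₀ : ℝ) < 0 := by
          intro h
          have := (halfspace_lt_iff u X Y₀).mp h
          linarith
        exact le_antisymm hle (not_lt.mp hge)
      rw [SetLike.mem_coe, AffineSubspace.mem_mk', vsub_eq_sub]
      have hgoal : (inner ℝ d₀ (u - m₀) : ℝ) = 0 := by rw [real_inner_comm]; exact hf0
      exact Submodule.mem_orthogonal_singleton_iff_inner_right.mpr hgoal
    have hdirle : (affineSpan ℝ T).direction ≤ W₀ := by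
      have h1 : affineSpan ℝ T ≤ AffineSubspace.mk' m₀ W₀ := affineSpan_le.mpr hTsub
      have h2 := AffineSubspace.direction_le h1
      rwa [AffineSubspace.direction_mk'] at h2
    have hwT : w ∈ T := by
      have := hball 0 (zero_mem W₀) (by simpa using hδ0)
      simpa using this
    have hdirge : W₀ ≤ (affineSpan ℝ T).direction := by
      intro v hv
      set c : ℝ := δ / (2 * (‖v‖ + 1)) with hc
      have hc0 : 0 < c := by positivity
      have hcv : ‖c • v‖ < δ := by
        rw [norm_smul, Real.norm_eq_abs, abs_of_pos hc0, hc]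
        rw [div_mul_eq_mul_div, div_lt_iff₀ (by positivity)]
        nlinarith [norm_nonneg v]
      have hmem : w + c • v ∈ T := hball (c • v) (W₀.smul_mem c hv) hcv
      have hvsub : (w + c • v) -ᵥ w ∈ (affineSpan ℝ T).direction :=
        AffineSubspace.vsub_mem_direction (subset_affineSpan ℝ T hmem)
          (subset_affineSpan ℝ T hwT)
      rw [vsub_eq_sub, add_sub_cancel_left] at hvsub
      have hv' : v = c⁻¹ • (c • v) := by
        rw [smul_smul, inv_mul_cancel₀ (ne_of_gt hc0), one_smul]
      rw [hv']
      exact Submodule.smul_mem _ _ hvsub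
    have hdir : (affineSpan ℝ T).direction = W₀ := le_antisymm hdirle hdirge
    show Module.finrank ℝ (affineSpan ℝ T).direction = n - 1
    rw [hdir]
    have h1 : Module.finrank ℝ (ℝ ∙ d₀) = 1 := finrank_span_singleton hd₀ne
    have h2 := Submodule.finrank_add_finrank_orthogonal (𝕜 := ℝ) (ℝ ∙ d₀)
    have h3 : Module.finrank ℝ (EuclideanSpace ℝ (Fin n)) = n := finrank_euclideanSpace_fin
    have h4 : Module.finrank ℝ W₀ = Module.finrank ℝ ((ℝ ∙ d₀)ᗮ) := by rw [hW₀]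
    omega
  -- conclude
  ext z
  simp only [Set.mem_iInter, Set.mem_setOf_eq]
  constructor
  · intro hz Y hY
    exact (halfspace_le_iff z X Y).mpr (hz Y hY.1)
  · intro hz
    exact hGP z (fun Y hYG => hz Y (hGS Y hYG))
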